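/- arXiv:math/0601493 — 2 statements merged into one kernel-verified Lean document; each statement's English description precedes it below -/
import Mathlib

section
/- Each of the seven tetrahedra T11 = {V10,V12,V14,V15}, T12 = {V12,V14,V15,V16}, T13 = {V12,V15,V16,V17}, T14 = {V12,V13,V15,V17}, T15 = {V10,V12,V13,V15}, T16 = {V10,V11,V13,V15}, T17 = {V10,V11,V12,V13} is taken by an integer affine unimodular transformation to the unit basis tetrahedron: for each of these tetrahedra, listed with vertices (P0,P1,P2,P3), there exist a 4×4 integer matrix M with determinant ±1 and an integer vector v ∈ ℤ^4 such that M·P0 + v = 0, M·P1 + v = e1, M·P2 + v = e2, and M·P3 + v = e3, where e1, e2, e3 are the first three standard basis vectors of ℤ^4. -/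
open Matrix Polynomial

def A1 : Matrix (Fin 4) (Fin 4) ℚ :=
  !![0, 1, 0, 0; 0, 0, 1, 0; 0, 0, 0, 1; 1, -3, 0, 4]

noncomputable def B11 : Matrix (Fin 4) (Fin 4) ℚ := (A1 ^ 2)⁻¹
noncomputable def B12 : Matrix (Fin 4) (Fin 4) ℚ := (A1 - 1) ^ 2 * (A1 ^ 2)⁻¹
noncomputable def B13 : Matrix (Fin 4) (Fin 4) ℚ := (A1 - 1) ^ 2 * (A1 + 1) * (A1 ^ 2)⁻¹

def V10 : Fin 4 → ℚ := ![-3, -2, -1, 1]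

/-- `V i j k` is the point `B11^i * B12^j * B13^k` applied to `V10`;
the paper's vertex `V_{1,4i+2j+k}`. -/
noncomputable def V (i j k : ℕ) : Fin 4 → ℚ := (B11 ^ i * B12 ^ j * B13 ^ k).mulVec V10

def stdQ (m : Fin 4) : Fin 4 → ℚ := fun i => if i = m then 1 else 0

/-- The tetrahedron with ordered vertices `P0 P1 P2 P3` is taken by an integer affine
unimodular transformation to the unit basis tetrahedron. -/
def UnimodularToUnitTetra (P0 P1 P2 P3 : Fin 4 → ℚ) : Prop :=
  ∃ (M : Matrix (Fin 4) (Fin 4) ℤ) (v : Fin 4 → ℤ),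
    (M.det = 1 ∨ M.det = -1) ∧
    (M.map (Int.cast : ℤ → ℚ)).mulVec P0 + (fun i => (v i : ℚ)) = 0 ∧
    (M.map (Int.cast : ℤ → ℚ)).mulVec P1 + (fun i => (v i : ℚ)) = stdQ 0 ∧
    (M.map (Int.cast : ℤ → ℚ)).mulVec P2 + (fun i => (v i : ℚ)) = stdQ 1 ∧
    (M.map (Int.cast : ℤ → ℚ)).mulVec P3 + (fun i => (v i : ℚ)) = stdQ 2


lemma hA2inv : (A1 ^ 2)⁻¹ = !![9, -4, -11, 3; 3, 0, -4, 1; 1, 0, 0, 0; 0, 1, 0, 0] := by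
  apply inv_eq_right_inv
  rw [pow_two]
  ext i j <;> fin_cases i <;> fin_cases j <;>
    simp [A1, Matrix.mul_apply, Fin.sum_univ_four, Matrix.one_apply, Matrix.vecHead, Matrix.vecTail] <;> norm_num

lemma hB11 : B11 = !![9, -4, -11, 3; 3, 0, -4, 1; 1, 0, 0, 0; 0, 1, 0, 0] := by
  rw [B11, hA2inv]

lemma hB12 : B12 = !![4, -4, -3, 1; 1, 1, -4, 1; 1, -2, 1, 0; 0, 1, -2, 1] := by
  rw [B12, hA2inv, pow_two]
  ext i j <;> fin_cases i <;> fin_cases j <;>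
    simp [A1, Matrix.mul_apply, Fin.sum_univ_four, Matrix.one_apply, Matrix.vecHead, Matrix.vecTail] <;> norm_num

lemma hB13 : B13 = !![5, -3, -7, 2; 2, -1, -3, 1; 1, -1, -1, 1; 1, -2, -1, 3] := by
  rw [B13, hA2inv, pow_two]
  ext i j <;> fin_cases i <;> fin_cases j <;>
    simp [A1, Matrix.mul_apply, Fin.sum_univ_four, Matrix.one_apply, Matrix.vecHead, Matrix.vecTail] <;> norm_num


lemma hV000 : V 0 0 0 = ![-3, -2, -1, 1] := by
  rw [V, hB11, hB12, hB13]
  simp only [pow_zero, pow_one, Matrix.one_mul, Matrix.mul_one]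
  funext r
  fin_cases r <;>
    simp [Matrix.mulVec, Matrix.mul_apply, Fin.sum_univ_four, V10, dotProduct, Matrix.vecHead, Matrix.vecTail, Matrix.one_apply] <;> norm_num


lemma hV001 : V 0 0 1 = ![0, 0, 1, 5] := by
  rw [V, hB11, hB12, hB13]
  simp only [pow_zero, pow_one, Matrix.one_mul, Matrix.mul_one]
  funext r
  fin_cases r <;>
    simp [Matrix.mulVec, Matrix.mul_apply, Fin.sum_univ_four, V10, dotProduct, Matrix.vecHead, Matrix.vecTail, Matrix.one_apply] <;> norm_num


lemma hV010 : V 0 1 0 = ![0, 0, 0, 1] := by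
  rw [V, hB11, hB12, hB13]
  simp only [pow_zero, pow_one, Matrix.one_mul, Matrix.mul_one]
  funext r
  fin_cases r <;>
    simp [Matrix.mulVec, Matrix.mul_apply, Fin.sum_univ_four, V10, dotProduct, Matrix.vecHead, Matrix.vecTail, Matrix.one_apply] <;> norm_num


lemma hV011 : V 0 1 1 = ![2, 1, 1, 3] := by
  rw [V, hB11, hB12, hB13]
  simp only [pow_zero, pow_one, Matrix.one_mul, Matrix.mul_one]
  funext r
  fin_cases r <;>
    simp [Matrix.mulVec, Matrix.mul_apply, Fin.sum_univ_four, V10, dotProduct, Matrix.vecHead, Matrix.vecTail, Matrix.one_apply] <;> norm_num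


lemma hV100 : V 1 0 0 = ![-5, -4, -3, -2] := by
  rw [V, hB11, hB12, hB13]
  simp only [pow_zero, pow_one, Matrix.one_mul, Matrix.mul_one]
  funext r
  fin_cases r <;>
    simp [Matrix.mulVec, Matrix.mul_apply, Fin.sum_univ_four, V10, dotProduct, Matrix.vecHead, Matrix.vecTail, Matrix.one_apply] <;> norm_num


lemma hV101 : V 1 0 1 = ![4, 1, 0, 0] := by
  rw [V, hB11, hB12, hB13]
  simp only [pow_zero, pow_one, Matrix.one_mul, Matrix.mul_one]
  funext r
  fin_cases r <;>
    simp [Matrix.mulVec, Matrix.mul_apply, Fin.sum_univ_four, V10, dotProduct, Matrix.vecHead, Matrix.vecTail, Matrix.one_apply] <;> norm_num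


lemma hV110 : V 1 1 0 = ![3, 1, 0, 0] := by
  rw [V, hB11, hB12, hB13]
  simp only [pow_zero, pow_one, Matrix.one_mul, Matrix.mul_one]
  funext r
  fin_cases r <;>
    simp [Matrix.mulVec, Matrix.mul_apply, Fin.sum_univ_four, V10, dotProduct, Matrix.vecHead, Matrix.vecTail, Matrix.one_apply] <;> norm_num


lemma hV111 : V 1 1 1 = ![12, 5, 2, 1] := by
  rw [V, hB11, hB12, hB13]
  simp only [pow_zero, pow_one, Matrix.one_mul, Matrix.mul_one]
  funext r
  fin_cases r <;>
    simp [Matrix.mulVec, Matrix.mul_apply, Fin.sum_univ_four, V10, dotProduct, Matrix.vecHead, Matrix.vecTail, Matrix.one_apply] <;> norm_num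


set_option maxHeartbeats 3000000 in
theorem statement5 :
    UnimodularToUnitTetra (V 0 0 0) (V 0 1 0) (V 1 0 0) (V 1 0 1) ∧
    UnimodularToUnitTetra (V 0 1 0) (V 1 0 0) (V 1 0 1) (V 1 1 0) ∧
    UnimodularToUnitTetra (V 0 1 0) (V 1 0 1) (V 1 1 0) (V 1 1 1) ∧
    UnimodularToUnitTetra (V 0 1 0) (V 0 1 1) (V 1 0 1) (V 1 1 1) ∧
    UnimodularToUnitTetra (V 0 0 0) (V 0 1 0) (V 0 1 1) (V 1 0 1) ∧
    UnimodularToUnitTetra (V 0 0 0) (V 0 0 1) (V 0 1 1) (V 1 0 1) ∧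
    UnimodularToUnitTetra (V 0 0 0) (V 0 0 1) (V 0 1 0) (V 0 1 1) := by
  refine ⟨?_, ?_, ?_, ?_, ?_, ?_, ?_⟩
  · refine ⟨!![-3, 19, -28, 8; 0, -1, 2, -1; 1, -5, 7, -2; -1, 8, -13, 4], ![-7, 1, 2, -4], ?_, ?_, ?_, ?_, ?_⟩
    · first
      | exact Or.inl (by decide)
      | exact Or.inr (by decide)
    all_goals
      simp only [hV000, hV010, hV100, hV101]
      funext r
      fin_cases r <;>
        simp [Matrix.mulVec, dotProduct, Fin.sum_univ_four, stdQ, Matrix.map_apply] <;> norm_num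
  · refine ⟨!![0, 2, -5, 2; 1, 1, -7, 4; -1, -1, 8, -5; 0, -3, 7, -3], ![-2, -4, 5, 3], ?_, ?_, ?_, ?_, ?_⟩
    · first
      | exact Or.inl (by decide)
      | exact Or.inr (by decide)
    all_goals
      simp only [hV010, hV100, hV101, hV110]
      funext r
      fin_cases r <;>
        simp [Matrix.mulVec, dotProduct, Fin.sum_univ_four, stdQ, Matrix.map_apply] <;> norm_num
  · refine ⟨!![1, 6, -21, 9; -1, -6, 21, -10; 0, -1, 3, -1; 0, -2, 5, -2], ![-9, 10, 1, 2], ?_, ?_, ?_, ?_, ?_⟩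
    · first
      | exact Or.inl (by decide)
      | exact Or.inr (by decide)
    all_goals
      simp only [hV010, hV101, hV110, hV111]
      funext r
      fin_cases r <;>
        simp [Matrix.mulVec, dotProduct, Fin.sum_univ_four, stdQ, Matrix.map_apply] <;> norm_num
  · refine ⟨!![0, 2, -5, 2; -2, 20, -38, 11; 1, -9, 17, -5; 1, -8, 14, -4], ![-2, -11, 5, 4], ?_, ?_, ?_, ?_, ?_⟩
    · first
      | exact Or.inl (by decide)
      | exact Or.inr (by decide)
    all_goals
      simp only [hV010, hV011, hV101, hV111]
      funext r
      fin_cases r <;>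
        simp [Matrix.mulVec, dotProduct, Fin.sum_univ_four, stdQ, Matrix.map_apply] <;> norm_num
  · refine ⟨!![-3, 17, -24, 6; 0, 1, -2, 1; 1, -5, 7, -2; -1, 7, -11, 3], ![-5, -1, 2, -3], ?_, ?_, ?_, ?_, ?_⟩
    · first
      | exact Or.inl (by decide)
      | exact Or.inr (by decide)
    all_goals
      simp only [hV000, hV010, hV011, hV101]
      funext r
      fin_cases r <;>
        simp [Matrix.mulVec, dotProduct, Fin.sum_univ_four, stdQ, Matrix.map_apply] <;> norm_num
  · refine ⟨!![-3, 17, -24, 6; 6, -33, 46, -11; -2, 12, -17, 4; 2, -10, 13, -3], ![-5, 9, -3, 2], ?_, ?_, ?_, ?_, ?_⟩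
    · first
      | exact Or.inl (by decide)
      | exact Or.inr (by decide)
    all_goals
      simp only [hV000, hV001, hV011, hV101]
      funext r
      fin_cases r <;>
        simp [Matrix.mulVec, dotProduct, Fin.sum_univ_four, stdQ, Matrix.map_apply] <;> norm_num
  · refine ⟨!![-1, -3, 9, -2; -2, -4, 15, -4; 2, 3, -12, 3; 0, -2, 4, -1], ![2, 5, -3, 1], ?_, ?_, ?_, ?_, ?_⟩
    · first
      | exact Or.inl (by decide)
      | exact Or.inr (by decide)
    all_goals
      simp only [hV000, hV001, hV010, hV011]
      funext r
      fin_cases r <;>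
        simp [Matrix.mulVec, dotProduct, Fin.sum_univ_four, stdQ, Matrix.map_apply] <;> norm_num
end

section
/- The eight points V30, V31, V32, V33, V34, V35, V36, V37 are pairwise distinct integer points, and they all lie in a common hyperplane at unit integer distance from the origin: there exists an integer linear functional f on ℤ^4, given by a coefficient vector in ℤ^4 whose entries have greatest common divisor 1, such that f(V3m) = 1 for every m = 0, 1, ..., 7. -/
open Matrix Polynomial

def A3 : Matrix (Fin 4) (Fin 4) ℚ :=
  !![0, 1, 0, 0; 0, 0, 1, 0; 0, 0, 0, 1; -1, -3, 1, 3]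

lemma hdetA3 : A3.det ≠ 0 := by
  simp (config := {decide := true}) [A3, Matrix.det_succ_row_zero, Fin.sum_univ_succ, Fin.succAbove]

lemma hdetA3sub : (A3 - 1).det ≠ 0 := by
  have h : A3 - 1 = !![-1, 1, 0, 0; 0, -1, 1, 0; 0, 0, -1, 1; -1, -3, 1, 2] := by
    ext i j
    fin_cases i <;> fin_cases j <;>
      simp [A3, Matrix.one_apply, Matrix.vecHead, Matrix.vecTail] <;> norm_num
  rw [h]
  simp (config := {decide := true}) [Matrix.det_succ_row_zero, Fin.sum_univ_succ, Fin.succAbove]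
  norm_num

lemma hdetA3add : (A3 + 1).det ≠ 0 := by
  have h : A3 + 1 = !![1, 1, 0, 0; 0, 1, 1, 0; 0, 0, 1, 1; -1, -3, 1, 4] := by
    ext i j
    fin_cases i <;> fin_cases j <;>
      simp [A3, Matrix.one_apply, Matrix.vecHead, Matrix.vecTail] <;> norm_num
  rw [h]
  simp (config := {decide := true}) [Matrix.det_succ_row_zero, Fin.sum_univ_succ, Fin.succAbove]
  norm_num

noncomputable def gA3 : GL (Fin 4) ℚ := Matrix.GeneralLinearGroup.mkOfDetNeZero A3 hdetA3
noncomputable def uA3 : GL (Fin 4) ℚ := Matrix.GeneralLinearGroup.mkOfDetNeZero (A3 - 1) hdetA3sub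
noncomputable def vA3 : GL (Fin 4) ℚ := Matrix.GeneralLinearGroup.mkOfDetNeZero (A3 + 1) hdetA3add

noncomputable def B31 : GL (Fin 4) ℚ := (gA3 ^ 2)⁻¹
noncomputable def B32 : GL (Fin 4) ℚ := uA3 * gA3⁻¹
noncomputable def B33 : GL (Fin 4) ℚ := vA3

def V30 : Fin 4 → ℚ := ![-1, -1, -1, 0]

/-- The eight vertices `V30, …, V37` of the face from Example 3. -/
noncomputable def Vs : Fin 8 → (Fin 4 → ℚ) :=
  ![V30,
    ((B33 : GL (Fin 4) ℚ) : Matrix (Fin 4) (Fin 4) ℚ).mulVec V30,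
    ((B32 * B33 : GL (Fin 4) ℚ) : Matrix (Fin 4) (Fin 4) ℚ).mulVec V30,
    ((B31 * B32⁻¹ : GL (Fin 4) ℚ) : Matrix (Fin 4) (Fin 4) ℚ).mulVec V30,
    ((B32⁻¹ : GL (Fin 4) ℚ) : Matrix (Fin 4) (Fin 4) ℚ).mulVec V30,
    ((B31 * B33 ^ 2 : GL (Fin 4) ℚ) : Matrix (Fin 4) (Fin 4) ℚ).mulVec V30,
    ((B31 * B33 : GL (Fin 4) ℚ) : Matrix (Fin 4) (Fin 4) ℚ).mulVec V30,
    ((B31 * B32⁻¹ * B33 : GL (Fin 4) ℚ) : Matrix (Fin 4) (Fin 4) ℚ).mulVec V30]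


def M31 : Matrix (Fin 4) (Fin 4) ℚ := !![10,0,-10,3; -3,1,3,-1; 1,0,0,0; 0,1,0,0]
def M32 : Matrix (Fin 4) (Fin 4) ℚ := !![4,-1,-3,1; -1,1,0,0; 0,-1,1,0; 0,0,-1,1]
def M32i : Matrix (Fin 4) (Fin 4) ℚ := !![1,3,2,-1; 1,4,2,-1; 1,4,3,-1; 1,4,3,0]
def M33 : Matrix (Fin 4) (Fin 4) ℚ := !![1,1,0,0; 0,1,1,0; 0,0,1,1; -1,-3,1,4]
def MAinv : Matrix (Fin 4) (Fin 4) ℚ := !![-3,1,3,-1; 1,0,0,0; 0,1,0,0; 0,0,1,0]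
def P2 : Matrix (Fin 4) (Fin 4) ℚ := !![3,0,-3,1; -1,0,1,0; 0,-1,0,1; -1,-3,0,3]
def P3 : Matrix (Fin 4) (Fin 4) ℚ := !![3,2,-1,0; 0,3,2,-1; 1,3,2,-1; 1,4,2,-1]
def P5 : Matrix (Fin 4) (Fin 4) ℚ := !![5,2,-4,1; -1,2,3,-1; 1,2,1,0; 0,1,2,1]
def P6 : Matrix (Fin 4) (Fin 4) ℚ := !![7,1,-7,2; -2,1,3,-1; 1,1,0,0; 0,1,1,0]
def P7 : Matrix (Fin 4) (Fin 4) ℚ := !![3,5,1,-1; 1,6,4,-2; 2,7,4,-2; 2,8,5,-2]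

lemma hA3inv : A3⁻¹ = MAinv := by
  apply Matrix.inv_eq_right_inv
  ext i j
  fin_cases i <;> fin_cases j <;>
    norm_num [A3, MAinv, Matrix.mul_apply, Fin.sum_univ_four, Matrix.one_apply,
      Matrix.vecHead, Matrix.vecTail, Fin.ext_iff, Matrix.cons_val_two, Matrix.cons_val_three]

lemma coe_B31 : ((B31 : GL (Fin 4) ℚ) : Matrix (Fin 4) (Fin 4) ℚ) = M31 := by
  have h1 : ((gA3 ^ 2 : GL (Fin 4) ℚ) : Matrix (Fin 4) (Fin 4) ℚ) = A3 * A3 := by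
    rw [sq, Units.val_mul]; rfl
  have h2 : ((B31 : GL (Fin 4) ℚ) : Matrix (Fin 4) (Fin 4) ℚ) = (A3 * A3)⁻¹ := by
    rw [B31, Matrix.coe_units_inv, h1]
  rw [h2]
  apply Matrix.inv_eq_right_inv
  ext i j
  fin_cases i <;> fin_cases j <;>
    norm_num [A3, M31, Matrix.mul_apply, Fin.sum_univ_four, Matrix.one_apply,
      Matrix.vecHead, Matrix.vecTail, Fin.ext_iff, Matrix.cons_val_two, Matrix.cons_val_three]

lemma coe_B32 : ((B32 : GL (Fin 4) ℚ) : Matrix (Fin 4) (Fin 4) ℚ) = M32 := by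
  have h1 : ((B32 : GL (Fin 4) ℚ) : Matrix (Fin 4) (Fin 4) ℚ) = (A3 - 1) * A3⁻¹ := by
    rw [B32, Units.val_mul, Matrix.coe_units_inv]; rfl
  have hsub : A3 - 1 = !![-1, 1, 0, 0; 0, -1, 1, 0; 0, 0, -1, 1; -1, -3, 1, 2] := by
    ext i j
    fin_cases i <;> fin_cases j <;>
      simp [A3, Matrix.one_apply, Matrix.vecHead, Matrix.vecTail, Matrix.cons_val_two, Matrix.cons_val_three] <;> norm_num
  rw [h1, hsub, hA3inv]
  ext i j
  fin_cases i <;> fin_cases j <;>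
    norm_num [MAinv, M32, Matrix.mul_apply, Fin.sum_univ_four,
      Matrix.vecHead, Matrix.vecTail, Matrix.cons_val_two, Matrix.cons_val_three]

lemma coe_B32inv : ((B32⁻¹ : GL (Fin 4) ℚ) : Matrix (Fin 4) (Fin 4) ℚ) = M32i := by
  rw [Matrix.coe_units_inv, coe_B32]
  apply Matrix.inv_eq_right_inv
  ext i j
  fin_cases i <;> fin_cases j <;>
    norm_num [M32, M32i, Matrix.mul_apply, Fin.sum_univ_four, Matrix.one_apply,
      Matrix.vecHead, Matrix.vecTail, Fin.ext_iff, Matrix.cons_val_two, Matrix.cons_val_three]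

lemma coe_B33 : ((B33 : GL (Fin 4) ℚ) : Matrix (Fin 4) (Fin 4) ℚ) = M33 := by
  have h1 : ((B33 : GL (Fin 4) ℚ) : Matrix (Fin 4) (Fin 4) ℚ) = A3 + 1 := rfl
  rw [h1]
  ext i j
  fin_cases i <;> fin_cases j <;>
    norm_num [A3, M33, Matrix.add_apply, Matrix.one_apply,
      Matrix.vecHead, Matrix.vecTail, Fin.ext_iff, Matrix.cons_val_two, Matrix.cons_val_three]

lemma coe_e2 : ((B32 * B33 : GL (Fin 4) ℚ) : Matrix (Fin 4) (Fin 4) ℚ) = P2 := by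
  rw [Units.val_mul, coe_B32, coe_B33]
  ext i j
  fin_cases i <;> fin_cases j <;>
    norm_num [M32, M33, P2, Matrix.mul_apply, Fin.sum_univ_four,
      Matrix.vecHead, Matrix.vecTail, Matrix.cons_val_two, Matrix.cons_val_three]

lemma coe_e3 : ((B31 * B32⁻¹ : GL (Fin 4) ℚ) : Matrix (Fin 4) (Fin 4) ℚ) = P3 := by
  rw [Units.val_mul, coe_B31, coe_B32inv]
  ext i j
  fin_cases i <;> fin_cases j <;>
    norm_num [M31, M32i, P3, Matrix.mul_apply, Fin.sum_univ_four,
      Matrix.vecHead, Matrix.vecTail, Matrix.cons_val_two, Matrix.cons_val_three]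

lemma coe_e5 : ((B31 * B33 ^ 2 : GL (Fin 4) ℚ) : Matrix (Fin 4) (Fin 4) ℚ) = P5 := by
  have h1 : ((B33 ^ 2 : GL (Fin 4) ℚ) : Matrix (Fin 4) (Fin 4) ℚ) = M33 * M33 := by
    rw [sq, Units.val_mul, coe_B33]
  rw [Units.val_mul, coe_B31, h1, ← Matrix.mul_assoc]
  ext i j
  fin_cases i <;> fin_cases j <;>
    norm_num [M31, M33, P5, Matrix.mul_apply, Fin.sum_univ_four,
      Matrix.vecHead, Matrix.vecTail, Matrix.cons_val_two, Matrix.cons_val_three]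

lemma coe_e6 : ((B31 * B33 : GL (Fin 4) ℚ) : Matrix (Fin 4) (Fin 4) ℚ) = P6 := by
  rw [Units.val_mul, coe_B31, coe_B33]
  ext i j
  fin_cases i <;> fin_cases j <;>
    norm_num [M31, M33, P6, Matrix.mul_apply, Fin.sum_univ_four,
      Matrix.vecHead, Matrix.vecTail, Matrix.cons_val_two, Matrix.cons_val_three]

lemma coe_e7 : ((B31 * B32⁻¹ * B33 : GL (Fin 4) ℚ) : Matrix (Fin 4) (Fin 4) ℚ) = P7 := by
  rw [Units.val_mul, coe_e3, coe_B33]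
  ext i j
  fin_cases i <;> fin_cases j <;>
    norm_num [P3, M33, P7, Matrix.mul_apply, Fin.sum_univ_four,
      Matrix.vecHead, Matrix.vecTail, Matrix.cons_val_two, Matrix.cons_val_three]

def Wz : Fin 8 → Fin 4 → ℤ :=
  ![![-1,-1,-1,0], ![-2,-2,-1,3], ![0,0,1,4], ![-4,-5,-6,-7],
    ![-6,-7,-8,-8], ![-3,-4,-4,-3], ![-1,-2,-2,-2], ![-9,-11,-13,-15]]

lemma hVsW : ∀ m i, Vs m i = ((Wz m i : ℤ) : ℚ) := by
  intro m i
  fin_cases m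
  · show V30 i = ((Wz 0 i : ℤ) : ℚ)
    fin_cases i <;> norm_num [V30, Wz, Matrix.vecHead, Matrix.vecTail, Matrix.cons_val_two, Matrix.cons_val_three]
  · show (((B33 : GL (Fin 4) ℚ) : Matrix (Fin 4) (Fin 4) ℚ).mulVec V30) i = ((Wz 1 i : ℤ) : ℚ)
    rw [coe_B33]
    fin_cases i <;> norm_num [M33, V30, Wz, Matrix.mulVec, dotProduct,
      Fin.sum_univ_four, Matrix.vecHead, Matrix.vecTail, Matrix.cons_val_two, Matrix.cons_val_three]
  · show (((B32 * B33 : GL (Fin 4) ℚ) : Matrix (Fin 4) (Fin 4) ℚ).mulVec V30) i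
        = ((Wz 2 i : ℤ) : ℚ)
    rw [coe_e2]
    fin_cases i <;> norm_num [P2, V30, Wz, Matrix.mulVec, dotProduct,
      Fin.sum_univ_four, Matrix.vecHead, Matrix.vecTail, Matrix.cons_val_two, Matrix.cons_val_three]
  · show (((B31 * B32⁻¹ : GL (Fin 4) ℚ) : Matrix (Fin 4) (Fin 4) ℚ).mulVec V30) i
        = ((Wz 3 i : ℤ) : ℚ)
    rw [coe_e3]
    fin_cases i <;> norm_num [P3, V30, Wz, Matrix.mulVec, dotProduct,
      Fin.sum_univ_four, Matrix.vecHead, Matrix.vecTail, Matrix.cons_val_two, Matrix.cons_val_three]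
  · show (((B32⁻¹ : GL (Fin 4) ℚ) : Matrix (Fin 4) (Fin 4) ℚ).mulVec V30) i
        = ((Wz 4 i : ℤ) : ℚ)
    rw [coe_B32inv]
    fin_cases i <;> norm_num [M32i, V30, Wz, Matrix.mulVec, dotProduct,
      Fin.sum_univ_four, Matrix.vecHead, Matrix.vecTail, Matrix.cons_val_two, Matrix.cons_val_three, Matrix.cons_val_four]
  · show (((B31 * B33 ^ 2 : GL (Fin 4) ℚ) : Matrix (Fin 4) (Fin 4) ℚ).mulVec V30) i
        = ((![-3,-4,-4,-3] i : ℤ) : ℚ)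
    rw [coe_e5]
    fin_cases i <;> norm_num [P5, V30, Wz, Matrix.mulVec, dotProduct,
      Fin.sum_univ_four, Matrix.vecHead, Matrix.vecTail, Matrix.cons_val_two, Matrix.cons_val_three]
  · show (((B31 * B33 : GL (Fin 4) ℚ) : Matrix (Fin 4) (Fin 4) ℚ).mulVec V30) i
        = ((![-1,-2,-2,-2] i : ℤ) : ℚ)
    rw [coe_e6]
    fin_cases i <;> norm_num [P6, V30, Wz, Matrix.mulVec, dotProduct,
      Fin.sum_univ_four, Matrix.vecHead, Matrix.vecTail, Matrix.cons_val_two, Matrix.cons_val_three]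
  · show (((B31 * B32⁻¹ * B33 : GL (Fin 4) ℚ) : Matrix (Fin 4) (Fin 4) ℚ).mulVec V30) i
        = ((![-9,-11,-13,-15] i : ℤ) : ℚ)
    rw [coe_e7]
    fin_cases i <;> norm_num [P7, V30, Wz, Matrix.mulVec, dotProduct,
      Fin.sum_univ_four, Matrix.vecHead, Matrix.vecTail, Matrix.cons_val_two, Matrix.cons_val_three]

theorem statement18 :
    Function.Injective Vs ∧
    (∀ m i, ∃ z : ℤ, Vs m i = (z : ℚ)) ∧
    (∃ f : Fin 4 → ℤ, Finset.univ.gcd f = 1 ∧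
      ∀ m, ∑ i, (f i : ℚ) * Vs m i = 1) := by
  refine ⟨?_, ?_, ?_⟩
  · intro a b hab
    have h0 : Wz a 0 = Wz b 0 := by
      have h := congrFun hab 0
      rw [hVsW a 0, hVsW b 0] at h
      exact_mod_cast h
    have h1 : Wz a 1 = Wz b 1 := by
      have h := congrFun hab 1
      rw [hVsW a 1, hVsW b 1] at h
      exact_mod_cast h
    have key : ∀ a b : Fin 8, Wz a 0 = Wz b 0 → Wz a 1 = Wz b 1 → a = b := by decide
    exact key a b h0 h1
  · intro m i
    exact ⟨Wz m i, hVsW m i⟩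
  · refine ⟨![3, 3, -7, 2], by decide, ?_⟩
    intro m
    have key2 : ∀ m : Fin 8, 3 * Wz m 0 + 3 * Wz m 1 + -7 * Wz m 2 + 2 * Wz m 3 = 1 := by
      decide
    rw [Fin.sum_univ_four, hVsW m 0, hVsW m 1, hVsW m 2, hVsW m 3,
      show ((![3, 3, -7, 2] : Fin 4 → ℤ) 0) = 3 from rfl,
      show ((![3, 3, -7, 2] : Fin 4 → ℤ) 1) = 3 from rfl,
      show ((![3, 3, -7, 2] : Fin 4 → ℤ) 2) = -7 from rfl,
      show ((![3, 3, -7, 2] : Fin 4 → ℤ) 3) = 2 from rfl]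
    exact_mod_cast key2 m
end
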